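/- For any finite node set X ⊆ ℝ², the dimension of the space P_{n,X} = {p ∈ Π_n : p vanishes on X} equals N − |Y|, where N = (n+1)(n+2)/2 and Y is any maximal n-independent subset of X. -/

import Mathlib

open MvPolynomial
open scoped Classical
set_option synthInstance.maxHeartbeats 1000000
set_option maxHeartbeats 1000000

/-- Evaluation of a bivariate polynomial at a point of the plane. -/
noncomputable def evalPt (p : MvPolynomial (Fin 2) ℝ) (A : ℝ × ℝ) : ℝ :=
  MvPolynomial.eval ![A.1, A.2] p

/-- `p` is an `n`-fundamental polynomial of the node `A` with respect to the node set `X`. -/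
def IsFund (n : ℕ) (X : Finset (ℝ × ℝ)) (A : ℝ × ℝ)
    (p : MvPolynomial (Fin 2) ℝ) : Prop :=
  p.totalDegree ≤ n ∧ evalPt p A = 1 ∧ ∀ B ∈ X, B ≠ A → evalPt p B = 0

/-- The node set `X` is `n`-independent. -/
def Indep (n : ℕ) (X : Finset (ℝ × ℝ)) : Prop :=
  ∀ A ∈ X, ∃ p, IsFund n X A p

/-- `d(n,k) = N_n - N_{n-k} = k(2n+3-k)/2`. -/
def dd (n k : ℕ) : ℕ := k * (2 * n + 3 - k) / 2

/-- The node set `X` is `n`-poised. -/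
def Poised (n : ℕ) (X : Finset (ℝ × ℝ)) : Prop :=
  X.card = (n + 1) * (n + 2) / 2 ∧
  ∀ p : MvPolynomial (Fin 2) ℝ, p.totalDegree ≤ n →
    (∀ A ∈ X, evalPt p A = 0) → p = 0

/-- The space of polynomials of total degree at most `n` vanishing on `X`. -/
noncomputable def vanishSp (n : ℕ) (X : Finset (ℝ × ℝ)) :
    Submodule ℝ (MvPolynomial (Fin 2) ℝ) :=
  MvPolynomial.restrictTotalDegree (Fin 2) ℝ n ⊓
    ⨅ A ∈ X, LinearMap.ker ((MvPolynomial.aeval (R := ℝ) ![A.1, A.2]).toLinearMap)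

/-! ### Auxiliary lemmas -/

lemma aux_aeval_eq_eval (x : Fin 2 → ℝ) (p : MvPolynomial (Fin 2) ℝ) :
    MvPolynomial.aeval (R := ℝ) x p = MvPolynomial.eval x p := rfl

lemma aux_mem_vanishSp {n : ℕ} {X : Finset (ℝ × ℝ)} {p : MvPolynomial (Fin 2) ℝ} :
    p ∈ vanishSp n X ↔ p.totalDegree ≤ n ∧ ∀ A ∈ X, evalPt p A = 0 := by
  simp only [vanishSp, Submodule.mem_inf, Submodule.mem_iInf, LinearMap.mem_ker,
    AlgHom.toLinearMap_apply, mem_restrictTotalDegree, aux_aeval_eq_eval]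
  rfl

lemma aux_fsum_eq (f : Fin 2 →₀ ℕ) : (f.sum fun _ e => e) = f 0 + f 1 := by
  rw [Finsupp.sum_fintype _ _ (fun _ => rfl), Fin.sum_univ_two]

noncomputable def auxTset (n : ℕ) : Finset (ℕ × ℕ) :=
  (Finset.range (n+1)).biUnion (fun k => Finset.HasAntidiagonal.antidiagonal k)

lemma aux_mem_Tset (n : ℕ) (p : ℕ × ℕ) : p ∈ auxTset n ↔ p.1 + p.2 ≤ n := by
  simp [auxTset, Finset.mem_biUnion, Finset.HasAntidiagonal.mem_antidiagonal, Nat.lt_succ_iff]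

lemma aux_Tset_card (n : ℕ) : (auxTset n).card = (n+1)*(n+2)/2 := by
  have hdisj : ∀ k ∈ Finset.range (n+1), ∀ l ∈ Finset.range (n+1), k ≠ l →
      Disjoint (Finset.HasAntidiagonal.antidiagonal k) (Finset.HasAntidiagonal.antidiagonal l) := by
    intro k _ l _ hkl
    simp only [Finset.disjoint_left, Finset.HasAntidiagonal.mem_antidiagonal]
    rintro p h1 h2; exact hkl (h1 ▸ h2)
  rw [auxTset, Finset.card_biUnion hdisj]
  simp only [Finset.Nat.card_antidiagonal]
  have h1 : ∑ k ∈ Finset.range (n+1), (k+1) = ∑ k ∈ Finset.range (n+2), k := by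
    rw [Finset.sum_range_succ' (fun k => k) (n+1)]; simp
  rw [h1, Finset.sum_range_id]
  simp [Nat.mul_comm]

noncomputable def auxEquivT (n : ℕ) :
    {f : Fin 2 →₀ ℕ | (f.sum fun _ e => e) ≤ n} ≃ ↥(auxTset n) where
  toFun f := ⟨(f.1 0, f.1 1), by
    rw [aux_mem_Tset]; have := f.2; rwa [Set.mem_setOf_eq, aux_fsum_eq] at this⟩
  invFun p := ⟨Finsupp.equivFunOnFinite.symm ![p.1.1, p.1.2], by
    rw [Set.mem_setOf_eq, aux_fsum_eq]
    have := (aux_mem_Tset n p.1).mp p.2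
    simpa using this⟩
  left_inv f := by
    ext i
    simp only [Finsupp.coe_equivFunOnFinite_symm]
    fin_cases i <;> simp
  right_inv p := by ext <;> simp

lemma aux_finrank_W (n : ℕ) :
    Module.finrank ℝ (restrictTotalDegree (Fin 2) ℝ n) = (n+1)*(n+2)/2 := by
  have b := (basisRestrictSupport ℝ
    {f : Fin 2 →₀ ℕ | (f.sum fun _ e => e) ≤ n}).reindex (auxEquivT n)
  have h := Module.finrank_eq_card_basis b
  rw [Fintype.card_coe, aux_Tset_card] at h
  exact h

/-- Any polynomial of degree ≤ n vanishing on a maximal `n`-independent subset `Y` of `X`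
vanishes on all of `X`. -/
lemma aux_vanish_eq (n : ℕ) (X Y : Finset (ℝ × ℝ)) (hYX : Y ⊆ X) (hY : Indep n Y)
    (hmax : ∀ Z, Z ⊆ X → Indep n Z → Y ⊆ Z → Z = Y) :
    vanishSp n X = vanishSp n Y := by
  apply le_antisymm
  · intro p hp
    rw [aux_mem_vanishSp] at hp ⊢
    exact ⟨hp.1, fun A hA => hp.2 A (hYX hA)⟩
  · intro p hp
    rw [aux_mem_vanishSp] at hp ⊢
    refine ⟨hp.1, fun A hA => ?_⟩
    by_contra hpa
    set Z : Finset (ℝ × ℝ) := insert A Y with hZ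
    have hCp_deg : ∀ c : ℝ, (MvPolynomial.C c * p).totalDegree ≤ n := by
      intro c
      refine le_trans (totalDegree_mul _ _) ?_
      rw [totalDegree_C]
      simpa using hp.1
    have hindep : Indep n Z := by
      intro B hB
      rcases Finset.mem_insert.mp hB with hBA | hBY
      · subst hBA
        refine ⟨MvPolynomial.C (evalPt p B)⁻¹ * p, hCp_deg _, ?_, ?_⟩
        · simp only [evalPt, map_mul, eval_C]
          exact inv_mul_cancel₀ hpa
        · intro B' hB' hne
          have hB'Y : B' ∈ Y := by
            rcases Finset.mem_insert.mp hB' with h | h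
            · exact absurd h hne
            · exact h
          simp only [evalPt, map_mul, eval_C]
          rw [show MvPolynomial.eval ![B'.1, B'.2] p = 0 from hp.2 B' hB'Y]
          ring
      · obtain ⟨q, hqdeg, hqB, hq0⟩ := hY B hBY
        refine ⟨q - MvPolynomial.C (evalPt q A * (evalPt p A)⁻¹) * p, ?_, ?_, ?_⟩
        · refine le_trans (totalDegree_sub _ _) ?_
          exact max_le hqdeg (hCp_deg _)
        · simp only [evalPt, map_sub, map_mul, eval_C]
          rw [show MvPolynomial.eval ![B.1, B.2] p = 0 from hp.2 B hBY]
          simpa [evalPt] using hqB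
        · intro B' hB' hne
          rcases Finset.mem_insert.mp hB' with h | h
          · subst h
            simp only [evalPt, map_sub, map_mul, eval_C]
            have : evalPt p B' ≠ 0 := hpa
            rw [mul_assoc, inv_mul_cancel₀ (show MvPolynomial.eval ![B'.1, B'.2] p ≠ 0 from this),
              mul_one, sub_self]
          · simp only [evalPt, map_sub, map_mul, eval_C]
            rw [show MvPolynomial.eval ![B'.1, B'.2] p = 0 from hp.2 B' h,
              show MvPolynomial.eval ![B'.1, B'.2] q = 0 from hq0 B' h hne]
            ring
    have hZY : Z = Y := hmax Z (Finset.insert_subset hA hYX) hindep (Finset.subset_insert _ _)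
    have hAY : A ∈ Y := hZY ▸ Finset.mem_insert_self A Y
    exact hpa (hp.2 A hAY)

theorem stmt4 (n : ℕ) (X Y : Finset (ℝ × ℝ)) (hYX : Y ⊆ X) (hY : Indep n Y)
    (hmax : ∀ Z, Z ⊆ X → Indep n Z → Y ⊆ Z → Z = Y) :
    Module.finrank ℝ (vanishSp n X) = (n + 1) * (n + 2) / 2 - Y.card := by
  rw [aux_vanish_eq n X Y hYX hY hmax]
  set W := restrictTotalDegree (Fin 2) ℝ n with hW
  -- evaluation map on points of Y
  set E : MvPolynomial (Fin 2) ℝ →ₗ[ℝ] (↥Y → ℝ) :=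
    LinearMap.pi (fun A : ↥Y => (MvPolynomial.aeval (R := ℝ) ![A.1.1, A.1.2]).toLinearMap)
    with hE
  set E' : W →ₗ[ℝ] (↥Y → ℝ) := E.domRestrict W with hE'
  have hVle : vanishSp n Y ≤ W := inf_le_left
  have hker : Submodule.comap W.subtype (vanishSp n Y) = LinearMap.ker E' := by
    ext x
    simp only [Submodule.mem_comap, Submodule.coe_subtype, LinearMap.mem_ker, hE',
      LinearMap.domRestrict_apply, aux_mem_vanishSp]
    constructor
    · rintro ⟨-, h⟩
      funext A
      simpa [hE, evalPt, aux_aeval_eq_eval] using h A.1 A.2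
    · intro h
      refine ⟨(mem_restrictTotalDegree _ _ _).mp x.2, fun A hA => ?_⟩
      have := congrFun h ⟨A, hA⟩
      simpa [hE, evalPt, aux_aeval_eq_eval] using this
  have hfr : Module.finrank ℝ (vanishSp n Y) = Module.finrank ℝ (LinearMap.ker E') := by
    rw [← hker]
    exact (Submodule.comapSubtypeEquivOfLe hVle).finrank_eq.symm
  -- surjectivity of E'
  have hsurj : Function.Surjective E' := by
    intro f
    have hq := fun (A : ↥Y) => Classical.choose_spec (hY A.1 A.2)
    set q : ↥Y → MvPolynomial (Fin 2) ℝ := fun A => Classical.choose (hY A.1 A.2) with hqdef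
    set p : MvPolynomial (Fin 2) ℝ := ∑ A : ↥Y, f A • q A with hpdef
    have hpW : p ∈ W := by
      refine Submodule.sum_mem _ fun A _ => Submodule.smul_mem _ _ ?_
      exact (mem_restrictTotalDegree _ _ _).mpr (hq A).1
    refine ⟨⟨p, hpW⟩, ?_⟩
    funext B
    have : E' ⟨p, hpW⟩ B = ∑ A : ↥Y, f A * evalPt (q A) B.1 := by
      simp only [hE', LinearMap.domRestrict_apply, hE, hpdef, map_sum, map_smul]
      simp [LinearMap.pi_apply, aux_aeval_eq_eval, evalPt]
    rw [this, Finset.sum_eq_single B]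
    · rw [(hq B).2.1, mul_one]
    · intro A _ hAB
      have hne : (B : ℝ × ℝ) ≠ (A : ℝ × ℝ) := fun h => hAB (Subtype.ext h).symm
      rw [(hq A).2.2 B.1 B.2 hne, mul_zero]
    · intro h
      exact absurd (Finset.mem_univ B) h
  have hrange : Module.finrank ℝ (LinearMap.range E') = Y.card := by
    rw [LinearMap.range_eq_top.mpr hsurj, finrank_top, Module.finrank_pi,
      Fintype.card_coe]
  have hrn := LinearMap.finrank_range_add_finrank_ker E'
  rw [hrange] at hrn
  have hWfr : Module.finrank ℝ W = (n+1)*(n+2)/2 := aux_finrank_W n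
  rw [hfr]
  omega
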